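/- arXiv:1612.03084 — 3 statements merged into one kernel-verified Lean document; each statement's English description precedes it below -/
import Mathlib

section
/- Fix n ≥ 1. Let b_n(R) denote the set of monic polynomials p ∈ ℤ[X] of degree n all of whose complex roots have absolute value at most R. Then there is a constant C > 0 (depending only on n) such that |b_n(R)| ≤ C · R^{n(n+1)/2} for all sufficiently large R. -/
open Polynomial

lemma sum_range_sub_two (n : ℕ) : (∑ i ∈ Finset.range n, (n - i)) * 2 = n * (n + 1) := by
  induction n with
  | zero => simp
  | succ n ih =>
    have h : ∑ i ∈ Finset.range (n+1), (n + 1 - i) =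
        (∑ i ∈ Finset.range n, (n - i)) + (n + 1) := by
      rw [Finset.sum_range_succ]
      have : ∀ i ∈ Finset.range n, (n + 1 - i) = (n - i) + 1 := by
        intro i hi; rw [Finset.mem_range] at hi; omega
      rw [Finset.sum_congr rfl this, Finset.sum_add_distrib]
      simp [Finset.card_range]
      omega
    rw [h, Nat.add_mul, ih]
    ring

lemma sum_range_sub_eq (n : ℕ) : ∑ i ∈ Finset.range n, (n - i) = n * (n + 1) / 2 := by
  have := sum_range_sub_two n
  omega

/-- The number of monic integer polynomials of degree `n ≥ 1` all of whose
complex roots have absolute value at most `R` is at most `C · R^(n(n+1)/2)` for large `R`. -/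
theorem card_polys_with_bounded_roots_le (n : ℕ) (hn : 1 ≤ n) :
    ∃ C : ℝ, 0 < C ∧ ∀ᶠ R : ℝ in Filter.atTop,
      ({p : Polynomial ℤ | p.Monic ∧ p.natDegree = n ∧
          ∀ z ∈ p.aroots ℂ, ‖z‖ ≤ R}.ncard : ℝ) ≤
        C * R ^ (n * (n + 1) / 2) := by
  classical
  refine ⟨∏ i : Fin n, (5 * (n.choose i) : ℝ), ?_, ?_⟩
  · refine Finset.prod_pos fun i _ => ?_
    have := Nat.choose_pos (le_of_lt i.isLt)
    positivity
  filter_upwards [Filter.eventually_ge_atTop (1 : ℝ)] with R hR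
  set S : Set (Polynomial ℤ) := {p : Polynomial ℤ | p.Monic ∧ p.natDegree = n ∧
      ∀ z ∈ p.aroots ℂ, ‖z‖ ≤ R} with hS
  set M : Fin n → ℤ := fun i => ⌈R ^ (n - (i : ℕ)) * (n.choose i : ℝ)⌉ with hM
  -- coefficient bound
  have key : ∀ p ∈ S, ∀ i : ℕ, |(p.coeff i : ℝ)| ≤ R ^ (n - i) * (n.choose i : ℝ) := by
    intro p hp i
    obtain ⟨h1, h2, h3⟩ := hp
    have hsplit : Splits (p.map (Int.castRingHom ℂ)) := IsAlgClosed.splits _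
    have hroots : ∀ z ∈ (p.map (Int.castRingHom ℂ)).roots, ‖z‖ ≤ R := by
      intro z hz
      have : z ∈ p.aroots ℂ := hz
      simpa using h3 z this
    have := Polynomial.coeff_le_of_roots_le i h1 hsplit hroots
    rw [h2] at this
    simpa [Polynomial.coeff_map] using this
  have hmem : ∀ p ∈ S, (fun i : Fin n => p.coeff i) ∈
      ((Fintype.piFinset fun i : Fin n => Finset.Icc (-(M i)) (M i) : Finset (Fin n → ℤ)) :
        Set (Fin n → ℤ)) := by
    intro p hp
    simp only [Finset.coe_sort_coe, Finset.mem_coe, Fintype.mem_piFinset, Finset.mem_Icc]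
    intro i
    have h := key p hp i
    have : |(p.coeff i : ℝ)| ≤ (M i : ℝ) := h.trans (Int.le_ceil _)
    rw [← Int.cast_abs, Int.cast_le, abs_le] at this
    exact this
  have hinj : Set.InjOn (fun p : Polynomial ℤ => fun i : Fin n => p.coeff i) S := by
    intro p hp q hq h
    obtain ⟨hp1, hp2, -⟩ := hp
    obtain ⟨hq1, hq2, -⟩ := hq
    ext k
    rcases lt_trichotomy k n with hk | hk | hk
    · exact congrFun h ⟨k, hk⟩
    · subst hk
      rw [← hp2, hp1.coeff_natDegree, hp2, ← hq2, hq1.coeff_natDegree]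
    · rw [Polynomial.coeff_eq_zero_of_natDegree_lt (hp2 ▸ hk),
        Polynomial.coeff_eq_zero_of_natDegree_lt (hq2 ▸ hk)]
  have hcard : S.ncard ≤ (Fintype.piFinset fun i : Fin n => Finset.Icc (-(M i)) (M i)).card := by
    have := Set.ncard_le_ncard_of_injOn _ hmem hinj (Finset.finite_toSet _)
    rwa [Set.ncard_coe_finset] at this
  have hMpos : ∀ i : Fin n, 1 ≤ R ^ (n - (i : ℕ)) * (n.choose i : ℝ) := by
    intro i
    have h1 : (1 : ℝ) ≤ R ^ (n - (i : ℕ)) := one_le_pow₀ hR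
    have h2 : (1 : ℝ) ≤ (n.choose i : ℝ) := by
      exact_mod_cast Nat.choose_pos (le_of_lt i.isLt)
    nlinarith
  have hbox : ((Fintype.piFinset fun i : Fin n => Finset.Icc (-(M i)) (M i)).card : ℝ) ≤
      ∏ i : Fin n, (5 * (n.choose i : ℝ) * R ^ (n - (i : ℕ))) := by
    rw [Fintype.card_piFinset]
    push_cast
    refine Finset.prod_le_prod (fun i _ => by positivity) fun i _ => ?_
    have hcardIcc : ((Finset.Icc (-(M i)) (M i)).card : ℝ) = ((2 * M i + 1 : ℤ).toNat : ℝ) := by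
      rw [Int.card_Icc]
      congr 1
      omega
    rw [hcardIcc]
    have hM1 : (1 : ℝ) ≤ (M i : ℝ) := le_trans (hMpos i) (Int.le_ceil _)
    have hMle : (M i : ℝ) ≤ R ^ (n - (i : ℕ)) * (n.choose i : ℝ) + 1 :=
      le_of_lt (Int.ceil_lt_add_one _)
    have hM1' : (1:ℤ) ≤ M i := by exact_mod_cast hM1
    have htn : ((2 * M i + 1 : ℤ).toNat : ℝ) = ((2 * M i + 1 : ℤ) : ℝ) := by
      exact_mod_cast Int.toNat_of_nonneg (by omega)
    rw [htn]
    push_cast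
    have := hMpos i
    nlinarith
  calc (S.ncard : ℝ) ≤ _ := by exact_mod_cast hcard
    _ ≤ ∏ i : Fin n, (5 * (n.choose i : ℝ) * R ^ (n - (i : ℕ))) := hbox
    _ = (∏ i : Fin n, (5 * (n.choose i) : ℝ)) * R ^ (n * (n + 1) / 2) := by
        rw [Finset.prod_mul_distrib, Finset.prod_pow_eq_pow_sum]
        congr 1
        rw [← sum_range_sub_eq n, Fin.sum_univ_eq_sum_range]
end

section
/- Let n ≥ 2, let R > 0, and let p(x) = x^n + a_{n−1}x^{n−1} + ⋯ + a_1 x + a_0 be a polynomial with real coefficients satisfying the three inequalities: (1) 1 > Σ_{k=0}^{n−1} |a_k|/R^{n−k}; (2) (1/2)^{n−1}·|a_{n−1}|/R > Σ_{k=0}^{n−2} (1/2)^k·|a_k|/R^{n−k} + (1/2)^n; (3) (1/3)^{n−1}·|a_{n−1}|/R > Σ_{k=0}^{n−2} (1/3)^k·|a_k|/R^{n−k} + (1/3)^n. Then p has exactly one complex root λ (counted with multiplicity) with |λ| > R/3; this root satisfies R/2 < |λ| < R, it is a simple root, it is real, and every other complex root μ of p satisfies |μ| < R/3. -/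
open Polynomial


section ArgPrinciple
open Complex Metric Set


-- integrability of single inverse

lemma intA {r : ℝ} (hr : 0 < r) (μ : ℂ) (hμ : ‖μ‖ ≠ r) :
    (∮ z in C(0, r), (z - μ)⁻¹) = if ‖μ‖ < r then 2 * Real.pi * I else 0 := by
  rcases lt_or_gt_of_ne hμ with h | h
  · rw [if_pos h]
    exact circleIntegral.integral_sub_inv_of_mem_ball (by simpa [Complex.dist_eq] using h)
  · rw [if_neg (by linarith)]
    have hne : ∀ z ∈ closedBall (0:ℂ) r, z - μ ≠ 0 := by
      intro z hz
      have : ‖z‖ ≤ r := by simpa [Complex.dist_eq] using mem_closedBall.mp hz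
      intro hzz
      rw [sub_eq_zero] at hzz
      subst hzz
      linarith
    exact Complex.circleIntegral_eq_zero_of_differentiable_on_off_countable hr.le
      Set.countable_empty
      ((continuousOn_id.sub continuousOn_const).inv₀ hne)
      (fun z hz => ((differentiableAt_id.sub_const μ).inv
        (hne z (ball_subset_closedBall hz.1))))


lemma logderiv_eval (a : ℂ) (L : List ℂ) (z : ℂ)
    (hz : eval z (C a * (L.map (fun μ => X - C μ)).prod) ≠ 0) :
    eval z (derivative (C a * (L.map (fun μ => X - C μ)).prod)) /
      eval z (C a * (L.map (fun μ => X - C μ)).prod)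
      = (L.map (fun μ => (z - μ)⁻¹)).sum := by
  induction L with
  | nil => simp
  | cons μ L ih =>
      have hre : C a * ((μ :: L).map (fun μ => X - C μ)).prod
          = (X - C μ) * (C a * (L.map (fun μ => X - C μ)).prod) := by
        simp [List.map_cons, List.prod_cons]; ring
      rw [hre] at hz ⊢
      have h1 : eval z (X - C μ) ≠ 0 := fun h => hz (by simp [eval_mul, h])
      have h2 : eval z (C a * (L.map (fun μ => X - C μ)).prod) ≠ 0 :=
        fun h => hz (by simp [eval_mul, h])
      rw [List.map_cons, List.sum_cons, ← ih h2]
      simp only [derivative_mul, eval_add, eval_mul, derivative_sub, derivative_X,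
        derivative_C, sub_zero, eval_one, one_mul, eval_sub, eval_X, eval_C] at h1 h2 ⊢
      generalize eval z (derivative (C a * (L.map (fun μ => X - C μ) : List ℂ[X]).prod)) = D at *
      generalize hE : eval z (C a * (L.map (fun μ => X - C μ) : List ℂ[X]).prod) = E at *
      have ha := left_ne_zero_of_mul h2
      have hq := right_ne_zero_of_mul h2
      field_simp

lemma intg_single {r : ℝ} (hr : 0 < r) {μ : ℂ} (hμ : ‖μ‖ ≠ r) :
    CircleIntegrable (fun z => (z - μ)⁻¹) 0 r := by
  apply ContinuousOn.circleIntegrable hr.le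
  apply (continuousOn_id.sub continuousOn_const).inv₀
  intro z hz
  rw [mem_sphere_zero_iff_norm] at hz
  intro h
  rw [Pi.sub_apply, id, sub_eq_zero] at h
  subst h
  exact hμ (by simpa using hz)

lemma cint_add {f g : ℂ → ℂ} {c : ℂ} {R : ℝ} (hf : CircleIntegrable f c R)
    (hg : CircleIntegrable g c R) :
    (∮ z in C(c,R), (f z + g z)) = (∮ z in C(c,R), f z) + ∮ z in C(c,R), g z := by
  simp only [circleIntegral, smul_add]
  exact intervalIntegral.integral_add hf.out hg.out

lemma intg_sum {r : ℝ} (hr : 0 < r) (L : List ℂ) (hL : ∀ μ ∈ L, ‖μ‖ ≠ r) :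
    CircleIntegrable (fun z => (L.map (fun μ => (z - μ)⁻¹)).sum) 0 r := by
  induction L with
  | nil => simpa using circleIntegrable_const (0:ℂ) (0:ℂ) r
  | cons μ L ih =>
      simp only [List.map_cons, List.sum_cons]
      exact (intg_single hr (hL μ (List.mem_cons_self))).add
        (ih (fun ν hν => hL ν (List.mem_cons_of_mem μ hν)))

lemma int_sum_eq {r : ℝ} (hr : 0 < r) (L : List ℂ) (hL : ∀ μ ∈ L, ‖μ‖ ≠ r) :
    (∮ z in C(0, r), (L.map (fun μ => (z - μ)⁻¹)).sum)
      = 2 * Real.pi * I * ((L.filter (fun μ => ‖μ‖ < r)).length : ℂ) := by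
  induction L with
  | nil => simp [circleIntegral]
  | cons μ L ih =>
      have hμ := hL μ (List.mem_cons_self)
      have hL' : ∀ ν ∈ L, ‖ν‖ ≠ r := fun ν hν => hL ν (List.mem_cons_of_mem μ hν)
      simp only [List.map_cons, List.sum_cons]
      rw [cint_add (intg_single hr hμ) (intg_sum hr L hL')]
      rw [intA hr μ hμ, ih hL']
      by_cases h : ‖μ‖ < r
      · rw [if_pos h, List.filter_cons_of_pos (by simpa using h), List.length_cons]
        push_cast
        ring
      · rw [if_neg h, List.filter_cons_of_neg (by simpa using h)]
        ring



lemma arg_principle (f : Polynomial ℂ) (hf : f ≠ 0) {r : ℝ} (hr : 0 < r)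
    (h : ∀ z ∈ sphere (0:ℂ) r, eval z f ≠ 0) :
    (∮ z in C(0,r), eval z (derivative f) / eval z f)
      = 2 * Real.pi * I * ((f.roots.filter (fun μ => ‖μ‖ < r)).card : ℂ) := by
  have hsp : f.roots.card = f.natDegree :=
    (Polynomial.splits_iff_card_roots).mp (IsAlgClosed.splits f)
  have hrep : C f.leadingCoeff * (f.roots.map (fun μ => X - C μ)).prod = f :=
    Polynomial.C_leadingCoeff_mul_prod_multiset_X_sub_C hsp
  set L : List ℂ := f.roots.toList with hLdef
  have hcoe : (L : Multiset ℂ) = f.roots := Multiset.coe_toList _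
  have hrep2 : C f.leadingCoeff * (L.map (fun μ => X - C μ)).prod = f := by
    conv_rhs => rw [← hrep, ← hcoe, Multiset.map_coe, Multiset.prod_coe]
  have hL : ∀ μ ∈ L, ‖μ‖ ≠ r := by
    intro μ hμ habs
    have hroot : μ ∈ f.roots := by rw [← hcoe]; exact_mod_cast hμ
    have := (Polynomial.mem_roots hf).mp hroot
    exact h μ (by simpa [mem_sphere_zero_iff_norm] using habs) this
  have heq : EqOn (fun z => eval z (derivative f) / eval z f)
      (fun z => (L.map (fun μ => (z - μ)⁻¹)).sum) (sphere (0:ℂ) r) := by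
    intro z hz
    rw [← hrep2]
    exact logderiv_eval _ L z (by rw [hrep2]; exact h z hz)
  rw [circleIntegral.integral_congr hr.le heq, int_sum_eq hr L hL]
  congr 2
  rw [← hcoe, Multiset.filter_coe, Multiset.coe_card]


lemma count_const (d g : Polynomial ℂ) {r : ℝ} (hr : 0 < r)
    (hdom : ∀ z ∈ sphere (0:ℂ) r, ‖eval z g‖ < ‖eval z d‖) :
    (((d+g).roots.filter (fun μ => ‖μ‖ < r)).card)
      = ((d.roots.filter (fun μ => ‖μ‖ < r)).card) := by
  set p : ℝ → Polynomial ℂ := fun t => d + C (t:ℂ) * g with hp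
  have hsphere_mem : ((r:ℂ)) ∈ sphere (0:ℂ) r := by
    simp [mem_sphere_zero_iff_norm, abs_of_pos hr]
  -- lower bound ε0
  have hcont_d : ContinuousOn (fun z => ‖eval z d‖ - ‖eval z g‖)
      (sphere (0:ℂ) r) := by
    apply ContinuousOn.sub
    · exact (continuous_norm.comp (Polynomial.continuous_aeval d)).continuousOn
    · exact (continuous_norm.comp (Polynomial.continuous_aeval g)).continuousOn
  obtain ⟨z₁, hz₁, hmin⟩ := (isCompact_sphere (0:ℂ) r).exists_isMinOn ⟨_, hsphere_mem⟩ hcont_d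
  set ε0 : ℝ := ‖eval z₁ d‖ - ‖eval z₁ g‖ with hε0
  have hε0pos : 0 < ε0 := sub_pos.mpr (hdom z₁ hz₁)
  have hlow : ∀ z ∈ sphere (0:ℂ) r, ε0 ≤ ‖eval z d‖ - ‖eval z g‖ :=
    fun z hz => hmin hz
  -- eval lower bound for p t
  have habs_t : ∀ t : ℝ, t ∈ Icc (0:ℝ) 1 → ∀ z ∈ sphere (0:ℂ) r,
      ε0 ≤ ‖eval z (p t)‖ := by
    intro t ht z hz
    have h1 : eval z (p t) = eval z d + (t:ℂ) * eval z g := by simp [hp]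
    have h2 : ‖eval z d‖
        ≤ ‖eval z (p t)‖ + ‖(t:ℂ) * eval z g‖ := by
      have he : eval z d = eval z (p t) + -((t:ℂ) * eval z g) := by rw [h1]; ring
      calc ‖eval z d‖
          ≤ ‖eval z (p t)‖ + ‖-((t:ℂ) * eval z g)‖ := by
            rw [he]; exact norm_add_le _ _
        _ = ‖eval z (p t)‖ + ‖(t:ℂ) * eval z g‖ := by rw [norm_neg]
    have h3 : ‖(t:ℂ) * eval z g‖ ≤ ‖eval z g‖ := by
      rw [norm_mul, Complex.norm_real, Real.norm_eq_abs, _root_.abs_of_nonneg ht.1]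
      nlinarith [norm_nonneg (eval z g), ht.2]
    have := hlow z hz
    linarith
  have hne : ∀ t : ℝ, t ∈ Icc (0:ℝ) 1 → ∀ z ∈ sphere (0:ℂ) r, eval z (p t) ≠ 0 := by
    intro t ht z hz h0
    have := habs_t t ht z hz
    rw [h0] at this
    simp at this
    linarith
  have hp0 : ∀ t : ℝ, t ∈ Icc (0:ℝ) 1 → p t ≠ 0 := by
    intro t ht h0
    exact hne t ht _ hsphere_mem (by rw [h0]; simp)
  -- integrability
  have hInt : ∀ t : ℝ, t ∈ Icc (0:ℝ) 1 →
      CircleIntegrable (fun z => eval z (derivative (p t)) / eval z (p t)) 0 r := by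
    intro t ht
    apply ContinuousOn.circleIntegrable hr.le
    exact ((derivative (p t)).continuous_aeval.continuousOn).div
      ((p t).continuous_aeval.continuousOn) (fun z hz => hne t ht z hz)
  -- bound on numerator of difference
  have hcontψ : ContinuousOn
      (fun z => eval z (derivative g) * eval z d - eval z (derivative d) * eval z g)
      (sphere (0:ℂ) r) :=
    (((derivative g).continuous_aeval.mul d.continuous_aeval).sub
      ((derivative d).continuous_aeval.mul g.continuous_aeval)).continuousOn
  obtain ⟨M, hM⟩ := (isCompact_sphere (0:ℂ) r).exists_bound_of_continuousOn hcontψ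
  have hM0 : 0 ≤ M := le_trans (norm_nonneg _) (hM z₁ hz₁)
  set K : ℝ := M / (ε0 * ε0) with hK
  have hK0 : 0 ≤ K := div_nonneg hM0 (by positivity)
  -- pointwise difference bound
  have hdiff : ∀ t ∈ Icc (0:ℝ) 1, ∀ s ∈ Icc (0:ℝ) 1, ∀ z ∈ sphere (0:ℂ) r,
      ‖eval z (derivative (p t)) / eval z (p t) - eval z (derivative (p s)) / eval z (p s)‖
        ≤ K * |t - s| := by
    intro t ht s hs z hz
    have hut : eval z (p t) ≠ 0 := hne t ht z hz
    have hus : eval z (p s) ≠ 0 := hne s hs z hz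
    have hdt : derivative (p t) = derivative d + C (t:ℂ) * derivative g := by
      simp [hp, derivative_add, derivative_C_mul]
    have hds : derivative (p s) = derivative d + C (s:ℂ) * derivative g := by
      simp [hp, derivative_add, derivative_C_mul]
    have hfrac : eval z (derivative (p t)) / eval z (p t)
          - eval z (derivative (p s)) / eval z (p s)
        = ((t:ℂ) - (s:ℂ)) *
            (eval z (derivative g) * eval z d - eval z (derivative d) * eval z g)
            / (eval z (p t) * eval z (p s)) := by
      have h1t : eval z (p t) = eval z d + (t:ℂ) * eval z g := by simp [hp]
      have h1s : eval z (p s) = eval z d + (s:ℂ) * eval z g := by simp [hp]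
      rw [hdt, hds]
      simp only [eval_add, eval_mul, eval_C]
      rw [h1t] at hut ⊢
      rw [h1s] at hus ⊢
      have hut' : eval z d + eval z g * (t:ℂ) ≠ 0 := by rwa [mul_comm]
      have hus' : eval z d + eval z g * (s:ℂ) ≠ 0 := by rwa [mul_comm]
      field_simp
      ring
    rw [hfrac]
    rw [norm_div, norm_mul]
    have hnum1 : ‖(t:ℂ) - (s:ℂ)‖ = |t - s| := by
      rw [← Complex.ofReal_sub, Complex.norm_real, Real.norm_eq_abs]
    have hnum2 : ‖eval z (derivative g) * eval z d - eval z (derivative d) * eval z g‖ ≤ M :=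
      hM z hz
    have hden : ε0 * ε0 ≤ ‖eval z (p t) * eval z (p s)‖ := by
      rw [norm_mul]
      have h1 := habs_t t ht z hz
      have h2 := habs_t s hs z hz
      nlinarith
    have hdenpos : (0:ℝ) < ε0 * ε0 := by positivity
    calc ‖(t:ℂ) - (s:ℂ)‖ * ‖eval z (derivative g) * eval z d - eval z (derivative d) * eval z g‖
          / ‖eval z (p t) * eval z (p s)‖
        ≤ |t - s| * M / (ε0 * ε0) := by
          apply div_le_div₀ (by positivity) _ hdenpos hden
          rw [hnum1]
          exact mul_le_mul_of_nonneg_left hnum2 (abs_nonneg _)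
      _ = K * |t - s| := by rw [hK]; ring
  -- the winding number function
  set F : ℝ → ℂ := fun t => ∮ z in C(0,r), eval z (derivative (p t)) / eval z (p t) with hF
  set N : ℝ → ℕ := fun t => (((p t).roots.filter (fun μ => ‖μ‖ < r)).card) with hN
  have harg : ∀ t ∈ Icc (0:ℝ) 1, F t = 2 * Real.pi * I * (N t : ℂ) := by
    intro t ht
    exact arg_principle (p t) (hp0 t ht) hr (hne t ht)
  have h2piI : (2 * (Real.pi:ℂ) * I) ≠ 0 := by
    simp [Real.pi_ne_zero, I_ne_zero, Complex.ofReal_ne_zero]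
  set η : ℝ → ℝ := fun t => ((2 * (Real.pi:ℂ) * I)⁻¹ * F t).re with hη
  have hη_eq : ∀ t ∈ Icc (0:ℝ) 1, η t = (N t : ℝ) := by
    intro t ht
    rw [hη]
    simp only
    rw [harg t ht, inv_mul_cancel_left₀ h2piI]
    simp
  have hFlip : ∀ t ∈ Icc (0:ℝ) 1, ∀ s ∈ Icc (0:ℝ) 1,
      ‖F t - F s‖ ≤ 2 * Real.pi * r * (K * |t - s|) := by
    intro t ht s hs
    rw [hF]
    simp only
    rw [← circleIntegral.integral_sub (hInt t ht) (hInt s hs)]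
    exact circleIntegral.norm_integral_le_of_norm_le_const hr.le
      (fun z hz => hdiff t ht s hs z hz)
  set Kc : ℝ := ‖(2 * (Real.pi:ℂ) * I)⁻¹‖ * (2 * Real.pi * r * K) with hKc
  have hηlip : LipschitzOnWith (Real.toNNReal Kc) η (Icc (0:ℝ) 1) := by
    apply LipschitzOnWith.of_dist_le_mul
    intro t ht s hs
    rw [Real.dist_eq, Real.dist_eq]
    have h1 : η t - η s = ((2 * (Real.pi:ℂ) * I)⁻¹ * (F t - F s)).re := by
      rw [hη]; simp only [mul_sub, Complex.sub_re]
    rw [h1]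
    calc |((2 * (Real.pi:ℂ) * I)⁻¹ * (F t - F s)).re|
        ≤ ‖(2 * (Real.pi:ℂ) * I)⁻¹ * (F t - F s)‖ := Complex.abs_re_le_norm _
      _ = ‖(2 * (Real.pi:ℂ) * I)⁻¹‖ * ‖F t - F s‖ := norm_mul _ _
      _ ≤ ‖(2 * (Real.pi:ℂ) * I)⁻¹‖ * (2 * Real.pi * r * (K * |t - s|)) := by
          exact mul_le_mul_of_nonneg_left (hFlip t ht s hs) (norm_nonneg _)
      _ ≤ Real.toNNReal Kc * |t - s| := by
          rw [Real.coe_toNNReal']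
          have h2 : Kc * |t - s| ≤ max Kc 0 * |t - s| :=
            mul_le_mul_of_nonneg_right (le_max_left _ _) (abs_nonneg _)
          calc ‖(2 * (Real.pi:ℂ) * I)⁻¹‖ * (2 * Real.pi * r * (K * |t - s|))
              = Kc * |t - s| := by rw [hKc]; ring
            _ ≤ _ := h2
  have hηcont : ContinuousOn η (Icc (0:ℝ) 1) := hηlip.continuousOn
  -- integrality + IVT : N 0 = N 1
  have hmem0 : (0:ℝ) ∈ Icc (0:ℝ) 1 := by norm_num
  have hmem1 : (1:ℝ) ∈ Icc (0:ℝ) 1 := by norm_num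
  have hkey : N 0 = N 1 := by
    by_contra hne'
    have hhalf : ∀ t ∈ Icc (0:ℝ) 1, ∀ m : ℕ, η t ≠ (m : ℝ) + 1/2 := by
      intro t ht m hcontr
      rw [hη_eq t ht] at hcontr
      have : (2 * (N t) : ℝ) = 2 * m + 1 := by push_cast; linarith
      have : 2 * (N t) = 2 * m + 1 := by exact_mod_cast this
      omega
    rcases lt_or_gt_of_ne hne' with hlt | hgt
    · have hsub : Icc (η 0) (η 1) ⊆ η '' Icc (0:ℝ) 1 :=
        intermediate_value_Icc (by norm_num) hηcont
      have hmemv : ((N 0 : ℝ) + 1/2) ∈ Icc (η 0) (η 1) := by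
        rw [hη_eq 0 hmem0, hη_eq 1 hmem1]
        constructor
        · linarith
        · have : (N 0 : ℝ) + 1 ≤ (N 1 : ℝ) := by exact_mod_cast Nat.succ_le_of_lt hlt
          linarith
      obtain ⟨t, ht, hval⟩ := hsub hmemv
      exact hhalf t ht (N 0) hval
    · have hsub : Icc (η 1) (η 0) ⊆ η '' Icc (0:ℝ) 1 :=
        intermediate_value_Icc' (by norm_num) hηcont
      have hmemv : ((N 1 : ℝ) + 1/2) ∈ Icc (η 1) (η 0) := by
        rw [hη_eq 0 hmem0, hη_eq 1 hmem1]
        constructor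
        · linarith
        · have : (N 1 : ℝ) + 1 ≤ (N 0 : ℝ) := by exact_mod_cast Nat.succ_le_of_lt hgt
          linarith
      obtain ⟨t, ht, hval⟩ := hsub hmemv
      exact hhalf t ht (N 1) hval
  have hP0 : p 0 = d := by simp [hp]
  have hP1 : p 1 = d + g := by simp [hp]
  have e0 := hN ▸ hkey
  rw [hN] at hkey
  simp only [hP0, hP1] at hkey
  exact hkey.symm


end ArgPrinciple

section Main
open Complex Metric Set

/-- Rouché-type root localization: if the coefficients of a monic real
polynomial `x^n + a_{n-1}x^{n-1} + ⋯ + a_0` satisfy the three stated inequalities, then the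
polynomial has exactly one complex root of absolute value `> R/3` (counted with multiplicity);
this root is real and simple, its absolute value lies strictly between `R/2` and `R`, and all
other complex roots have absolute value `< R/3`. -/
theorem dominant_real_root_of_coeff_ineqs (n : ℕ) (hn : 2 ≤ n) (R : ℝ) (hR : 0 < R)
    (a : ℕ → ℝ)
    (h1 : 1 > ∑ k ∈ Finset.range n, |a k| / R ^ (n - k))
    (h2 : (1 / 2 : ℝ) ^ (n - 1) * (|a (n - 1)| / R) >
      (∑ k ∈ Finset.range (n - 1), (1 / 2 : ℝ) ^ k * (|a k| / R ^ (n - k))) +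
        (1 / 2 : ℝ) ^ n)
    (h3 : (1 / 3 : ℝ) ^ (n - 1) * (|a (n - 1)| / R) >
      (∑ k ∈ Finset.range (n - 1), (1 / 3 : ℝ) ^ k * (|a k| / R ^ (n - k))) +
        (1 / 3 : ℝ) ^ n) :
    ∃ l : ℝ,
      (l : ℂ) ∈ ((X ^ n + ∑ k ∈ Finset.range n, C (a k) * X ^ k :
          Polynomial ℝ).map (algebraMap ℝ ℂ)).roots ∧
      R / 2 < |l| ∧ |l| < R ∧
      ((X ^ n + ∑ k ∈ Finset.range n, C (a k) * X ^ k :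
          Polynomial ℝ).map (algebraMap ℝ ℂ)).roots.count (l : ℂ) = 1 ∧
      (∀ μ ∈ ((X ^ n + ∑ k ∈ Finset.range n, C (a k) * X ^ k :
          Polynomial ℝ).map (algebraMap ℝ ℂ)).roots,
        μ ≠ (l : ℂ) → ‖μ‖ < R / 3) ∧
      (((X ^ n + ∑ k ∈ Finset.range n, C (a k) * X ^ k :
          Polynomial ℝ).map (algebraMap ℝ ℂ)).roots.filter
            (fun z => R / 3 < ‖z‖)).card = 1 := by
  -- scaled inequalities
  have hn1 : 1 ≤ n := le_trans (by norm_num) hn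
  have hRk : ∀ k : ℕ, (0:ℝ) < R ^ k := fun k => pow_pos hR k
  have hterm : ∀ k ∈ Finset.range n, ∀ c : ℝ, c / R ^ (n - k) * R ^ n = c * R ^ k := by
    intro k hk c
    have hkn : k ≤ n := le_of_lt (Finset.mem_range.mp hk)
    have hsplit : R ^ (n - k) * R ^ k = R ^ n := by rw [← pow_add, Nat.sub_add_cancel hkn]
    rw [div_mul_eq_mul_div, div_eq_iff (hRk _).ne', ← hsplit]
    ring
  have S1 : ∑ k ∈ Finset.range n, |a k| * R ^ k < R ^ n := by
    have := mul_lt_mul_of_pos_right h1 (hRk n)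
    rw [one_mul, Finset.sum_mul] at this
    calc ∑ k ∈ Finset.range n, |a k| * R ^ k
        = ∑ k ∈ Finset.range n, |a k| / R ^ (n - k) * R ^ n :=
          Finset.sum_congr rfl (fun k hk => (hterm k hk _).symm)
      _ < R ^ n := this
  have hsub : ∀ s : ℝ, ∀ k ∈ Finset.range (n-1),
      (1/s : ℝ) ^ k * (|a k| / R ^ (n - k)) * R ^ n = |a k| * (R/s) ^ k := by
    intro s k hk
    have hk' : k ∈ Finset.range n := Finset.mem_range.mpr (lt_of_lt_of_le
      (Finset.mem_range.mp hk) (Nat.sub_le n 1))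
    have := hterm k hk' (|a k|)
    have hpow : (R/s) ^ k = R ^ k * (1/s) ^ k := by
      rw [div_eq_mul_one_div R s, mul_pow]
    calc (1/s:ℝ) ^ k * (|a k| / R ^ (n - k)) * R ^ n
        = (|a k| / R ^ (n - k) * R ^ n) * (1/s) ^ k := by ring
      _ = |a k| * R ^ k * (1/s) ^ k := by rw [this]
      _ = |a k| * (R/s) ^ k := by rw [hpow]; ring
  have Sgen : ∀ s : ℝ, 0 < s →
      ((1 / s : ℝ) ^ (n - 1) * (|a (n - 1)| / R) >
        (∑ k ∈ Finset.range (n - 1), (1 / s : ℝ) ^ k * (|a k| / R ^ (n - k))) + (1 / s : ℝ) ^ n) →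
      (∑ k ∈ Finset.range (n-1), |a k| * (R/s) ^ k) + (R/s) ^ n < |a (n-1)| * (R/s) ^ (n-1) := by
    intro s hs hineq
    have := mul_lt_mul_of_pos_right hineq (hRk n)
    rw [add_mul, Finset.sum_mul] at this
    have hL : (1/s : ℝ) ^ (n - 1) * (|a (n - 1)| / R) * R ^ n = |a (n-1)| * (R/s) ^ (n-1) := by
      have hnn : n = (n - 1) + 1 := (Nat.succ_pred_eq_of_pos (lt_of_lt_of_le one_pos hn1)).symm
      have hpow : (R/s) ^ (n-1) = R ^ (n-1) * (1/s) ^ (n-1) := by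
        rw [div_eq_mul_one_div R s, mul_pow]
      rw [hpow]
      rw [hnn, pow_succ]
      field_simp
      ring_nf
      simp only [Nat.add_sub_cancel_left]
    have hLn : (1/s : ℝ) ^ n * R ^ n = (R/s) ^ n := by
      rw [div_eq_mul_one_div R s, mul_pow]; ring
    calc (∑ k ∈ Finset.range (n-1), |a k| * (R/s) ^ k) + (R/s) ^ n
        = (∑ k ∈ Finset.range (n-1), (1/s:ℝ)^k * (|a k| / R ^ (n - k)) * R ^ n)
            + (1/s : ℝ) ^ n * R ^ n := by
          rw [hLn]
          congr 1
          exact Finset.sum_congr rfl (fun k hk => (hsub s k hk).symm)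
      _ < (1/s : ℝ) ^ (n - 1) * (|a (n - 1)| / R) * R ^ n := this
      _ = |a (n-1)| * (R/s) ^ (n-1) := hL
  have S2 := Sgen 2 (by norm_num) h2
  have S3 := Sgen 3 (by norm_num) h3
  clear h1 h2 h3 hsub Sgen
  -- polynomial setup
  set b : ℕ → ℂ := fun k => algebraMap ℝ ℂ (a k) with hb
  set P : Polynomial ℂ :=
    (X ^ n + ∑ k ∈ Finset.range n, C (a k) * X ^ k : Polynomial ℝ).map (algebraMap ℝ ℂ)
    with hPdef
  have hPmap : P = X ^ n + ∑ k ∈ Finset.range n, C (b k) * X ^ k := by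
    rw [hPdef, Polynomial.map_add, Polynomial.map_pow, map_X, Polynomial.map_sum]
    congr 1
    refine Finset.sum_congr rfl fun k _ => ?_
    rw [Polynomial.map_mul, map_C, Polynomial.map_pow, map_X]
  have habs_b : ∀ k, ‖b k‖ = |a k| := by
    intro k
    rw [hb]
    simp
  -- a (n-1) ≠ 0
  have hSnn : (0:ℝ) ≤ ∑ k ∈ Finset.range (n-1), |a k| * (R/2) ^ k :=
    Finset.sum_nonneg fun k _ => mul_nonneg (abs_nonneg _) (le_of_lt (pow_pos (by linarith) k))
  have hApos : 0 < |a (n-1)| := by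
    have h1 : (0:ℝ) < (R/2) ^ n := pow_pos (by linarith) n
    have h2 : (0:ℝ) < (R/2) ^ (n-1) := pow_pos (by linarith) (n-1)
    nlinarith
  have hbne : b (n-1) ≠ 0 := by
    rw [hb]
    intro h
    have h0 : a (n-1) = 0 := (algebraMap ℝ ℂ).injective (by simp only at h; rw [h, map_zero])
    rw [h0, abs_zero] at hApos
    exact lt_irrefl 0 hApos
  -- eval estimates
  have hevalsum : ∀ (m' : ℕ) (z : ℂ),
      eval z (∑ k ∈ Finset.range m', C (b k) * X ^ k) = ∑ k ∈ Finset.range m', b k * z ^ k := by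
    intro m' z
    rw [eval_finset_sum]
    exact Finset.sum_congr rfl fun k _ => by rw [eval_mul, eval_C, eval_pow, eval_X]
  have habs_sum_le : ∀ (m' : ℕ) (r : ℝ) (z : ℂ), ‖z‖ = r →
      ‖eval z (∑ k ∈ Finset.range m', C (b k) * X ^ k)‖
        ≤ ∑ k ∈ Finset.range m', |a k| * r ^ k := by
    intro m' r z hz
    rw [hevalsum]
    refine le_trans (norm_sum_le _ _) (le_of_eq (Finset.sum_congr rfl fun k _ => ?_))
    rw [norm_mul, norm_pow, habs_b, hz]
  have hsph : ∀ (r : ℝ) (z : ℂ), z ∈ sphere (0:ℂ) r → ‖z‖ = r := by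
    intro r z hz
    rwa [mem_sphere_zero_iff_norm] at hz
  -- dominance on circle R
  have hd1 : ∀ z ∈ sphere (0:ℂ) R,
      ‖eval z (∑ k ∈ Finset.range n, C (b k) * X ^ k)‖
        < ‖eval z ((X:Polynomial ℂ) ^ n)‖ := by
    intro z hz
    have hz' := hsph R z hz
    rw [eval_pow, eval_X, norm_pow, hz']
    exact lt_of_le_of_lt (habs_sum_le n R z hz') S1
  -- dominance on circles R/s
  have hsplitsum : ∑ k ∈ Finset.range n, C (b k) * X ^ k
      = (∑ k ∈ Finset.range (n-1), C (b k) * X ^ k) + C (b (n-1)) * X ^ (n-1) := by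
    conv_lhs => rw [show n = (n-1)+1 by omega]
    rw [Finset.sum_range_succ]
  have hPsplit : P = C (b (n-1)) * X ^ (n-1)
      + ((X:Polynomial ℂ) ^ n + ∑ k ∈ Finset.range (n-1), C (b k) * X ^ k) := by
    rw [hPmap, hsplitsum]; ring
  have hds : ∀ s : ℝ, 1 ≤ s →
      ((∑ k ∈ Finset.range (n-1), |a k| * (R/s) ^ k) + (R/s) ^ n < |a (n-1)| * (R/s) ^ (n-1)) →
      ∀ z ∈ sphere (0:ℂ) (R/s),
      ‖eval z ((X:Polynomial ℂ) ^ n + ∑ k ∈ Finset.range (n-1), C (b k) * X ^ k)‖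
        < ‖eval z (C (b (n-1)) * X ^ (n-1))‖ := by
    intro s hs hS z hz
    have hz' := hsph (R/s) z hz
    have hround : ‖eval z (C (b (n-1)) * X ^ (n-1))‖
        = |a (n-1)| * (R/s) ^ (n-1) := by
      rw [eval_mul, eval_C, eval_pow, eval_X, norm_mul, norm_pow, habs_b, hz']
    rw [hround, eval_add]
    calc ‖eval z ((X:Polynomial ℂ) ^ n)
            + eval z (∑ k ∈ Finset.range (n-1), C (b k) * X ^ k)‖
        ≤ ‖eval z ((X:Polynomial ℂ) ^ n)‖
            + ‖eval z (∑ k ∈ Finset.range (n-1), C (b k) * X ^ k)‖ :=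
          norm_add_le _ _
      _ ≤ (R/s) ^ n + ∑ k ∈ Finset.range (n-1), |a k| * (R/s) ^ k := by
          refine add_le_add ?_ (habs_sum_le (n-1) (R/s) z hz')
          rw [eval_pow, eval_X, norm_pow, hz']
      _ < |a (n-1)| * (R/s) ^ (n-1) := by linarith
  have hd2 := hds 2 (by norm_num) S2
  have hd3 := hds 3 (by norm_num) S3
  -- no roots on spheres
  have hnoroot : ∀ (r : ℝ) (D G : Polynomial ℂ),
      (∀ z ∈ sphere (0:ℂ) r, ‖eval z G‖ < ‖eval z D‖) →
      ∀ z ∈ sphere (0:ℂ) r, eval z (D + G) ≠ 0 := by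
    intro r D G hdom z hz h0
    rw [eval_add] at h0
    have h1 := hdom z hz
    rw [show eval z D = - eval z G from eq_neg_of_add_eq_zero_left h0,
      norm_neg] at h1
    exact lt_irrefl _ h1
  -- root counts inside the three circles
  have c1 : (P.roots.filter (fun μ => ‖μ‖ < R)).card = n := by
    rw [hPmap, count_const ((X:Polynomial ℂ)^n) _ hR hd1, Polynomial.roots_X_pow,
      Multiset.nsmul_singleton,
      Multiset.filter_eq_self.mpr (fun μ hμ => by
        rw [Multiset.eq_of_mem_replicate hμ]; simpa using hR),
      Multiset.card_replicate]
  have c23 : ∀ s : ℝ, 0 < s →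
      (∀ z ∈ sphere (0:ℂ) (R/s),
        ‖eval z ((X:Polynomial ℂ) ^ n + ∑ k ∈ Finset.range (n-1), C (b k) * X ^ k)‖
          < ‖eval z (C (b (n-1)) * X ^ (n-1))‖) →
      (P.roots.filter (fun μ => ‖μ‖ < R/s)).card = n - 1 := by
    intro s hs hdom
    have hrs : (0:ℝ) < R/s := by positivity
    rw [hPsplit, count_const _ _ hrs hdom, Polynomial.roots_C_mul _ hbne,
      Polynomial.roots_X_pow, Multiset.nsmul_singleton,
      Multiset.filter_eq_self.mpr (fun μ hμ => by
        rw [Multiset.eq_of_mem_replicate hμ]; simpa using hrs),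
      Multiset.card_replicate]
  have c2 := c23 2 (by norm_num) hd2
  have c3 := c23 3 (by norm_num) hd3
  -- total number of roots
  have hdegsum : (∑ k ∈ Finset.range n, C (b k) * X ^ k).degree < ((n:ℕ) : WithBot ℕ) := by
    refine lt_of_le_of_lt (Polynomial.degree_sum_le _ _) ?_
    refine Finset.sup_lt_iff (α := WithBot ℕ) (WithBot.bot_lt_coe n) |>.mpr ?_
    intro k hk
    refine lt_of_le_of_lt (Polynomial.degree_C_mul_X_pow_le k (b k)) ?_
    exact WithBot.coe_lt_coe.mpr (Finset.mem_range.mp hk)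
  have hdegP : P.degree = n := by
    rw [hPmap, Polynomial.degree_add_eq_left_of_degree_lt
      (by rw [Polynomial.degree_X_pow]; exact hdegsum), Polynomial.degree_X_pow]
  have hPne : P ≠ 0 := by
    intro h
    rw [h, Polynomial.degree_zero] at hdegP
    exact absurd hdegP (by simp)
  have hdegnat : P.natDegree = n := Polynomial.natDegree_eq_of_degree_eq_some hdegP
  have hcard : Multiset.card P.roots = n := by
    rw [← hdegnat]
    exact (Polynomial.splits_iff_card_roots).mp (IsAlgClosed.splits P)
  -- all roots inside |z| < R
  have hfR : P.roots.filter (fun μ => ‖μ‖ < R) = P.roots :=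
    Multiset.eq_of_le_of_card_le (Multiset.filter_le _ _) (by rw [hcard, c1])
  have hall : ∀ μ ∈ P.roots, ‖μ‖ < R := by
    intro μ hμ
    rw [← hfR] at hμ
    exact (Multiset.mem_filter.mp hμ).2
  -- exactly one root outside |z| < R/2
  have hnot2card : (P.roots.filter (fun μ => ¬ ‖μ‖ < R/2)).card = 1 := by
    have hadd := congrArg Multiset.card
      (Multiset.filter_add_not (fun μ => ‖μ‖ < R/2) P.roots)
    rw [Multiset.card_add, c2, hcard] at hadd
    omega
  obtain ⟨ρ, hρeq⟩ := Multiset.card_eq_one.mp hnot2card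
  have hρfil : ρ ∈ P.roots.filter (fun μ => ¬ ‖μ‖ < R/2) := by
    rw [hρeq]; exact Multiset.mem_singleton_self ρ
  have hρmem : ρ ∈ P.roots := (Multiset.mem_filter.mp hρfil).1
  have hρbig : ¬ ‖ρ‖ < R/2 := (Multiset.mem_filter.mp hρfil).2
  have huniq : ∀ μ ∈ P.roots, ¬ (‖μ‖ < R/2) → μ = ρ := by
    intro μ hμ hbig
    have h' : μ ∈ P.roots.filter (fun μ => ¬ ‖μ‖ < R/2) :=
      Multiset.mem_filter.mpr ⟨hμ, hbig⟩
    rw [hρeq] at h'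
    exact Multiset.mem_singleton.mp h'
  have hf23 : P.roots.filter (fun μ => ‖μ‖ < R/3)
      = P.roots.filter (fun μ => ‖μ‖ < R/2) :=
    Multiset.eq_of_le_of_card_le
      (Multiset.monotone_filter_right _ (fun μ h => lt_trans h (by linarith)))
      (by rw [c2, c3])
  have hsmall2 : ∀ μ ∈ P.roots, ‖μ‖ < R/2 → ‖μ‖ < R/3 := by
    intro μ hμ hc
    have h' : μ ∈ P.roots.filter (fun μ => ‖μ‖ < R/2) :=
      Multiset.mem_filter.mpr ⟨hμ, hc⟩
    rw [← hf23] at h'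
    exact (Multiset.mem_filter.mp h').2
  have hsmall : ∀ μ ∈ P.roots, μ ≠ ρ → ‖μ‖ < R/3 := by
    intro μ hμ hne'
    by_cases hc : ‖μ‖ < R/2
    · exact hsmall2 μ hμ hc
    · exact absurd (huniq μ hμ hc) hne'
  -- location of ρ
  have hρroot : eval ρ P = 0 := (Polynomial.mem_roots hPne).mp hρmem
  have hρne2 : ‖ρ‖ ≠ R/2 := by
    intro h
    have hzs : ρ ∈ sphere (0:ℂ) (R/2) := by
      rw [mem_sphere_zero_iff_norm]; exact h
    exact hnoroot (R/2) _ _ hd2 ρ hzs (by rw [← hPsplit]; exact hρroot)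
  have hρgt : R/2 < ‖ρ‖ := lt_of_le_of_ne (not_lt.mp hρbig) (Ne.symm hρne2)
  have hρltR : ‖ρ‖ < R := hall ρ hρmem
  have hcount : P.roots.count ρ = 1 := by
    calc P.roots.count ρ
        = (P.roots.filter (fun μ => ¬ ‖μ‖ < R/2)).count ρ := by
          rw [Multiset.count_filter, if_pos hρbig]
      _ = ({ρ} : Multiset ℂ).count ρ := by rw [hρeq]
      _ = 1 := by simp
  -- ρ is real
  have hconj_eval : eval ((starRingEnd ℂ) ρ) P = 0 := by
    have hcomp : (starRingEnd ℂ).comp (algebraMap ℝ ℂ) = algebraMap ℝ ℂ := by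
      ext x; simp [Complex.conj_ofReal]
    rw [hPdef, Polynomial.eval_map] at hρroot ⊢
    calc eval₂ (algebraMap ℝ ℂ) ((starRingEnd ℂ) ρ)
          (X ^ n + ∑ k ∈ Finset.range n, C (a k) * X ^ k)
        = eval₂ ((starRingEnd ℂ).comp (algebraMap ℝ ℂ)) ((starRingEnd ℂ) ρ)
            (X ^ n + ∑ k ∈ Finset.range n, C (a k) * X ^ k) := by rw [hcomp]
      _ = (starRingEnd ℂ) (eval₂ (algebraMap ℝ ℂ) ρ
            (X ^ n + ∑ k ∈ Finset.range n, C (a k) * X ^ k)) :=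
          (Polynomial.hom_eval₂ _ _ _ _).symm
      _ = 0 := by rw [hρroot, map_zero]
  have hconjmem : (starRingEnd ℂ) ρ ∈ P.roots := (Polynomial.mem_roots hPne).mpr hconj_eval
  have hfix : (starRingEnd ℂ) ρ = ρ := by
    apply huniq _ hconjmem
    rw [Complex.norm_conj]
    exact hρbig
  obtain ⟨l, hl⟩ := Complex.conj_eq_iff_real.mp hfix
  have habsl : ‖ρ‖ = |l| := by rw [hl, Complex.norm_real, Real.norm_eq_abs]
  refine ⟨l, ?_, ?_, ?_, ?_, ?_, ?_⟩
  · rw [← hl]; exact hρmem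
  · rw [← habsl]; exact hρgt
  · rw [← habsl]; exact hρltR
  · rw [← hl]; exact hcount
  · intro μ hμ hne'
    refine hsmall μ hμ ?_
    rw [hl]
    exact hne'
  · have hcong : P.roots.filter (fun z => R/3 < ‖z‖)
        = P.roots.filter (fun μ => ¬ ‖μ‖ < R/2) := by
      apply Multiset.filter_congr
      intro μ hμ
      constructor
      · intro h hc
        exact absurd (hsmall2 μ hμ hc) (not_lt.mpr (le_of_lt h))
      · intro h
        have := not_lt.mp h
        linarith
    rw [hcong]
    exact hnot2card

end Main
end

section
/- Fix n ≥ 2. Let P_n(R) denote the set of monic polynomials p ∈ ℤ[X] of degree n that have a real root λ with 1 < λ ≤ R such that every other complex root μ of p satisfies |μ| < λ. Then there exists a constant C > 0 such that for all sufficiently large R, (1/C) · R^{n(n+1)/2} ≤ |P_n(R)| ≤ C · R^{n(n+1)/2}. -/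
open Polynomial

/-- The set of Perron polynomials of degree `n` with Perron root no larger than `R`:
monic integer polynomials of degree `n` with a real root `λ`, `1 < λ ≤ R`, such that every
other complex root (counted with multiplicity) has absolute value `< λ`. -/
noncomputable def perronPolys (n : ℕ) (R : ℝ) : Set (Polynomial ℤ) :=
  {p | p.Monic ∧ p.natDegree = n ∧ ∃ l : ℝ, 1 < l ∧ l ≤ R ∧
    Polynomial.aeval l p = 0 ∧
    ∀ μ ∈ (p.aroots ℂ).erase (l : ℂ), ‖μ‖ < l}


noncomputable def polyOf (n : ℕ) (c : Fin n → ℤ) : Polynomial ℤ :=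
  X ^ n + ∑ k : Fin n, C (c k) * X ^ (k : ℕ)

lemma polyOf_sum_degree_lt (n : ℕ) (c : Fin n → ℤ) :
    (∑ k : Fin n, C (c k) * X ^ (k : ℕ)).degree < (n : WithBot ℕ) := by
  apply lt_of_le_of_lt (Polynomial.degree_sum_le _ _)
  rw [Finset.sup_lt_iff (by exact_mod_cast WithBot.bot_lt_coe n)]
  intro k _
  apply lt_of_le_of_lt (Polynomial.degree_mul_le _ _)
  have h1 : (C (c k)).degree ≤ 0 := degree_C_le
  have h2 : ((X:ℤ[X]) ^ (k:ℕ)).degree ≤ ((k:ℕ) : WithBot ℕ) := degree_X_pow_le _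
  calc (C (c k)).degree + ((X:ℤ[X]) ^ (k:ℕ)).degree ≤ 0 + ((k:ℕ) : WithBot ℕ) :=
        add_le_add h1 h2
    _ = ((k:ℕ) : WithBot ℕ) := zero_add _
    _ < (n : WithBot ℕ) := by exact_mod_cast k.is_lt

lemma polyOf_coeff_lt (n : ℕ) (c : Fin n → ℤ) (k : Fin n) :
    (polyOf n c).coeff k = c k := by
  simp only [polyOf, coeff_add, coeff_X_pow, finset_sum_coeff, coeff_C_mul]
  rw [Finset.sum_eq_single k]
  · simp [(Fin.is_lt k).ne]
  · intro b _ hb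
    simp only [coeff_X_pow, mul_ite, mul_one, mul_zero, ite_eq_right_iff]
    intro h; exact absurd (Fin.ext h.symm) hb
  · simp

lemma polyOf_monic (n : ℕ) (c : Fin n → ℤ) : (polyOf n c).Monic :=
  monic_X_pow_add (polyOf_sum_degree_lt n c)

lemma polyOf_natDegree (n : ℕ) (c : Fin n → ℤ) : (polyOf n c).natDegree = n := by
  have h := degree_add_eq_left_of_degree_lt
    (lt_of_lt_of_le (polyOf_sum_degree_lt n c) (le_of_eq (degree_X_pow n).symm))
  have : (polyOf n c).degree = n := by rw [polyOf, h, degree_X_pow]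
  exact natDegree_eq_of_degree_eq_some this

lemma polyOf_injective (n : ℕ) : Function.Injective (polyOf n) := by
  intro a b h
  funext k
  rw [← polyOf_coeff_lt n a k, ← polyOf_coeff_lt n b k, h]

lemma eq_polyOf {n : ℕ} {p : Polynomial ℤ} (hm : p.Monic) (hd : p.natDegree = n) :
    p = polyOf n (fun k => p.coeff k) := by
  ext j
  rcases lt_trichotomy j n with hj | hj | hj
  · rw [polyOf_coeff_lt n _ ⟨j, hj⟩]
  · subst hj
    have h1 : p.coeff j = 1 := by
      have := hm.coeff_natDegree; rwa [hd] at this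
    have h2 : (polyOf j (fun k => p.coeff k)).coeff j = 1 := by
      have := (polyOf_monic j (fun k => p.coeff k)).coeff_natDegree
      rwa [polyOf_natDegree] at this
    rw [h1, h2]
  · rw [coeff_eq_zero_of_natDegree_lt (hd ▸ hj),
      coeff_eq_zero_of_natDegree_lt ((polyOf_natDegree n _).symm ▸ hj)]


lemma aeval_int_conj (p : Polynomial ℤ) (z : ℂ) :
    aeval ((starRingEnd ℂ) z) p = (starRingEnd ℂ) (aeval z p) := by
  rw [aeval_def, aeval_def, hom_eval₂]
  congr 1
  exact RingHom.ext_int _ _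

lemma aeval_int_ofReal (p : Polynomial ℤ) (x : ℝ) :
    aeval ((x : ℂ)) p = ((aeval x p : ℝ) : ℂ) := by
  rw [aeval_def, aeval_def]
  have h := hom_eval₂ p (algebraMap ℤ ℝ) Complex.ofRealHom x
  rw [RingHom.ext_int (Complex.ofRealHom.comp (algebraMap ℤ ℝ)) (algebraMap ℤ ℂ)] at h
  exact h.symm

lemma card_aroots_int {p : Polynomial ℤ} (hmon : p.Monic) :
    Multiset.card (p.aroots ℂ) = p.natDegree := by
  rw [aroots_def]
  have hsp : Splits (p.map (algebraMap ℤ ℂ)) :=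
    IsAlgClosed.splits _
  have h1 := splits_iff_card_roots.mp hsp
  rw [h1, hmon.natDegree_map]

lemma sum_aroots_int {p : Polynomial ℤ} (hmon : p.Monic) (hd : 0 < p.natDegree) :
    (p.aroots ℂ).sum = -(p.coeff (p.natDegree - 1) : ℂ) := by
  have hsp : Splits (p.map (algebraMap ℤ ℂ)) :=
    IsAlgClosed.splits _
  have h := hsp.nextCoeff_eq_neg_sum_roots_of_monic (hmon.map (algebraMap ℤ ℂ))
  have hd' : 0 < (map (algebraMap ℤ ℂ) p).natDegree := by
    rwa [hmon.natDegree_map]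
  rw [nextCoeff_of_natDegree_pos hd', hmon.natDegree_map, coeff_map] at h
  rw [aroots_def]
  have : ((p.coeff (p.natDegree - 1) : ℤ) : ℂ) = (algebraMap ℤ ℂ) (p.coeff (p.natDegree - 1)) := rfl
  rw [this, h, neg_neg]


lemma half_sum (N : ℕ) : ∑ k ∈ Finset.range N, (1/2:ℝ)^(N-k) ≤ 1 := by
  induction N with
  | zero => simp
  | succ N ih =>
    rw [Finset.sum_range_succ]
    have h1 : ∑ k ∈ Finset.range N, (1/2:ℝ)^(N+1-k)
        = (1/2) * ∑ k ∈ Finset.range N, (1/2:ℝ)^(N-k) := by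
      rw [Finset.mul_sum]
      refine Finset.sum_congr rfl fun k hk => ?_
      have hk' : k < N := Finset.mem_range.mp hk
      rw [show N + 1 - k = (N - k) + 1 by omega, pow_succ]
      ring
    rw [show N + 1 - N = 1 by omega, h1]
    nlinarith [ih]

lemma perron_key {n : ℕ} (hn : 2 ≤ n) {p : Polynomial ℤ} (hmon : p.Monic)
    (hdeg : p.natDegree = n) {m : ℝ} (hm : 3 ≤ m)
    (hnext : (p.coeff (n - 1) : ℝ) = -m)
    (hsm : ∀ k, k < n - 1 → |(p.coeff k : ℝ)| ≤ (m / (8 * n)) ^ (n - k)) :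
    ∃ l : ℝ, 1 < l ∧ l ≤ m + m / (8 * n) ∧ Polynomial.aeval l p = 0 ∧
      ∀ μ ∈ (p.aroots ℂ).erase (l : ℂ), ‖μ‖ < l := by
  classical
  obtain ⟨d, rfl⟩ : ∃ d, n = d + 2 := ⟨n - 2, by omega⟩
  have hm0 : 0 < m := by linarith
  set e : ℝ := m / (8 * (d + 2 : ℕ)) with he_def
  have hd2 : (0:ℝ) < (d + 2 : ℕ) := by positivity
  have he0 : 0 < e := by rw [he_def]; positivity
  have hen : ((d + 2 : ℕ) : ℝ) * e = m / 8 := by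
    rw [he_def]; field_simp
  have he16 : e ≤ m / 16 := by
    rw [he_def]
    rw [div_le_div_iff₀ (by positivity) (by norm_num)]
    have : (16:ℝ) ≤ 8 * ((d:ℝ) + 2) := by nlinarith [Nat.cast_nonneg (α := ℝ) d]
    push_cast
    nlinarith [Nat.cast_nonneg (α := ℝ) d]
  -- Step 1: the root equation estimate
  have hroot_eq : ∀ z : ℂ, (aeval z p) = 0 →
      ‖z‖ ^ (d+1) * ‖z - (m:ℂ)‖ ≤
        ∑ k ∈ Finset.range (d+1), e ^ (d+2-k) * ‖z‖ ^ k := by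
    intro z hz
    have hz' : (p.map (algebraMap ℤ ℂ)).eval z = 0 := by
      rw [eval_map, ← aeval_def, hz]
    rw [eval_eq_sum_range, hmon.natDegree_map, hdeg] at hz'
    rw [Finset.sum_range_succ, Finset.sum_range_succ] at hz'
    have hc2 : (p.map (algebraMap ℤ ℂ)).coeff (d+2) = 1 := by
      have := (hmon.map (algebraMap ℤ ℂ)).coeff_natDegree
      rwa [hmon.natDegree_map, hdeg] at this
    have hc1 : (p.map (algebraMap ℤ ℂ)).coeff (d+1) = -(m:ℂ) := by
      rw [coeff_map]
      have h1 : ((p.coeff (d+1) : ℤ) : ℂ) = ((p.coeff (d+1) : ℝ) : ℂ) := by push_cast; ring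
      have h2 : (p.coeff ((d+2) - 1) : ℝ) = -m := hnext
      norm_num at h2
      rw [show (algebraMap ℤ ℂ) (p.coeff (d+1)) = ((p.coeff (d+1) : ℤ) : ℂ) from rfl, h1, h2]
      push_cast; ring
    rw [hc2, hc1] at hz'
    have hkey : z^(d+1) * (z - (m:ℂ)) =
        -∑ i ∈ Finset.range (d+1), (p.map (algebraMap ℤ ℂ)).coeff i * z ^ i := by
      linear_combination hz'
    have habs : ‖z‖ ^ (d+1) * ‖z - (m:ℂ)‖
        = ‖∑ i ∈ Finset.range (d+1), (p.map (algebraMap ℤ ℂ)).coeff i * z ^ i‖ := by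
      rw [← norm_pow, ← norm_mul, hkey, norm_neg]
    rw [habs]
    refine le_trans (norm_sum_le _ _) (Finset.sum_le_sum fun k hk => ?_)
    rw [norm_mul, norm_pow]
    refine mul_le_mul_of_nonneg_right ?_ (pow_nonneg (norm_nonneg z) k)
    have hk' : k < d + 1 := Finset.mem_range.mp hk
    have hs := hsm k (by omega)
    rw [coeff_map]
    have habs : ‖(algebraMap ℤ ℂ) (p.coeff k)‖ = |(p.coeff k : ℝ)| := by
      rw [show (algebraMap ℤ ℂ) (p.coeff k) = ((p.coeff k : ℤ) : ℂ) from rfl,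
        Complex.norm_intCast]
    rw [habs]
    exact hs
  -- Step 2: dichotomy
  have hdich : ∀ z ∈ p.aroots ℂ, ‖z‖ ≤ 2*e ∨ ‖z - (m:ℂ)‖ ≤ e := by
    intro z hz
    by_cases hbig : ‖z‖ ≤ 2*e
    · exact Or.inl hbig
    right
    push_neg at hbig
    have hz0 : 0 < ‖z‖ := lt_of_le_of_lt (by positivity) hbig
    have h1 := hroot_eq z ((mem_aroots.mp hz).2)
    set A := ‖z‖ with hA
    have hterm : ∀ k ∈ Finset.range (d+1),
        e ^ (d+2-k) * A^k ≤ (e * A^(d+1)) * (1/2)^(d+1-k) := by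
      intro k hk
      have hk' : k < d + 1 := Finset.mem_range.mp hk
      have h2 : e ^ (d+2-k) = e ^ (d+1-k) * e := by
        rw [show d+2-k = (d+1-k)+1 by omega, pow_succ]
      have h3 : e ^ (d+1-k) ≤ (A/2) ^ (d+1-k) :=
        pow_le_pow_left₀ he0.le (by linarith) _
      have h4 : (A/2) ^ (d+1-k) = A^(d+1-k) * (1/2)^(d+1-k) := by
        rw [div_pow, div_pow, one_pow]; ring
      have h5 : A^(d+1-k) * A^k = A^(d+1) := by
        rw [← pow_add]; congr 1; omega
      calc e ^ (d+2-k) * A^k = e ^ (d+1-k) * e * A^k := by rw [h2]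
        _ ≤ (A/2) ^ (d+1-k) * e * A^k := by
            apply mul_le_mul_of_nonneg_right _ (pow_nonneg (norm_nonneg z) k)
            exact mul_le_mul_of_nonneg_right h3 he0.le
        _ = (e * A^(d+1)) * (1/2)^(d+1-k) := by rw [h4, ← h5]; ring
    have hsum2 : ∑ k ∈ Finset.range (d+1), e ^ (d+2-k) * A^k ≤ e * A^(d+1) := by
      calc ∑ k ∈ Finset.range (d+1), e ^ (d+2-k) * A^k
          ≤ ∑ k ∈ Finset.range (d+1), (e * A^(d+1)) * (1/2)^(d+1-k) :=
          Finset.sum_le_sum hterm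
        _ = (e * A^(d+1)) * ∑ k ∈ Finset.range (d+1), (1/2:ℝ)^(d+1-k) := by
          rw [Finset.mul_sum]
        _ ≤ (e * A^(d+1)) * 1 := by
          apply mul_le_mul_of_nonneg_left (half_sum (d+1))
          positivity
        _ = e * A^(d+1) := mul_one _
    have h6 : A ^ (d+1) * ‖z - (m:ℂ)‖ ≤ A^(d+1) * e := by
      calc A ^ (d+1) * ‖z - (m:ℂ)‖ ≤ _ := h1
        _ ≤ e * A^(d+1) := hsum2
        _ = A^(d+1) * e := mul_comm _ _
    exact le_of_mul_le_mul_left h6 (pow_pos hz0 _)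
  -- Step 3: card and sum of roots
  have hcard : Multiset.card (p.aroots ℂ) = d + 2 := by
    rw [card_aroots_int hmon, hdeg]
  have hsum : (p.aroots ℂ).sum = (m : ℂ) := by
    rw [sum_aroots_int hmon (by rw [hdeg]; omega), hdeg]
    have h1 : ((p.coeff (d+2-1) : ℤ) : ℂ) = ((p.coeff (d+2-1) : ℝ) : ℂ) := by push_cast; ring
    rw [h1, hnext]
    push_cast; ring
  have hresum : ((p.aroots ℂ).map Complex.re).sum = m := by
    have h1 := map_multiset_sum Complex.reAddGroupHom (p.aroots ℂ)
    rw [hsum] at h1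
    rw [Complex.coe_reAddGroupHom] at h1
    rw [← h1, Complex.ofReal_re]
  -- Step 4: exactly one root near m
  set t := (p.aroots ℂ).filter (fun z => ‖z - (m:ℂ)‖ ≤ e) with ht_def
  set u := (p.aroots ℂ).filter (fun z => ¬ ‖z - (m:ℂ)‖ ≤ e) with hu_def
  have htu : t + u = p.aroots ℂ := Multiset.filter_add_not _ _
  have hcardtu : Multiset.card t + Multiset.card u = d + 2 := by
    rw [← Multiset.card_add, htu, hcard]
  have ht_mem : ∀ z ∈ t, z ∈ p.aroots ℂ ∧ ‖z - (m:ℂ)‖ ≤ e :=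
    fun z hz => Multiset.mem_filter.mp hz
  have hu_mem : ∀ z ∈ u, z ∈ p.aroots ℂ ∧ ‖z‖ ≤ 2*e := by
    intro z hz
    obtain ⟨h1, h2⟩ := Multiset.mem_filter.mp hz
    exact ⟨h1, (hdich z h1).resolve_right h2⟩
  have ht_re : ∀ z ∈ t, m - e ≤ z.re ∧ z.re ≤ m + e := by
    intro z hz
    have h2 := (ht_mem z hz).2
    have h3 : |(z - (m:ℂ)).re| ≤ e := le_trans (Complex.abs_re_le_norm _) h2
    rw [Complex.sub_re, Complex.ofReal_re, abs_le] at h3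
    constructor <;> linarith [h3.1, h3.2]
  have hu_re : ∀ z ∈ u, -(2*e) ≤ z.re ∧ z.re ≤ 2*e := by
    intro z hz
    have h2 := (hu_mem z hz).2
    have h3 : |z.re| ≤ 2*e := le_trans (Complex.abs_re_le_norm _) h2
    rw [abs_le] at h3
    exact h3
  have hsum_split : (t.map Complex.re).sum + (u.map Complex.re).sum = m := by
    rw [← Multiset.sum_add, ← Multiset.map_add, htu, hresum]
  have hut_sum_ub : (u.map Complex.re).sum ≤ (Multiset.card u : ℝ) * (2*e) := by
    have := Multiset.sum_le_card_nsmul (u.map Complex.re) (2*e) (by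
      intro x hx
      obtain ⟨z, hz, rfl⟩ := Multiset.mem_map.mp hx
      exact (hu_re z hz).2)
    rwa [Multiset.card_map, nsmul_eq_mul] at this
  have hut_sum_lb : -((Multiset.card u : ℝ) * (2*e)) ≤ (u.map Complex.re).sum := by
    have := Multiset.card_nsmul_le_sum (s := u.map Complex.re) (a := -(2*e)) (by
      intro x hx
      obtain ⟨z, hz, rfl⟩ := Multiset.mem_map.mp hx
      exact (hu_re z hz).1)
    rwa [Multiset.card_map, nsmul_eq_mul, mul_neg] at this
  have hcu : (Multiset.card u : ℝ) * (2*e) ≤ m / 4 := by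
    have h1 : (Multiset.card u : ℝ) ≤ ((d+2 : ℕ) : ℝ) := by
      have : Multiset.card u ≤ d + 2 := by omega
      exact_mod_cast this
    calc (Multiset.card u : ℝ) * (2*e) ≤ ((d+2:ℕ):ℝ) * (2*e) := by
          apply mul_le_mul_of_nonneg_right h1 (by positivity)
      _ = 2 * (((d+2:ℕ):ℝ) * e) := by ring
      _ = 2 * (m/8) := by rw [hen]
      _ = m / 4 := by ring
  have hkt : Multiset.card t = 1 := by
    rcases Nat.lt_or_ge (Multiset.card t) 1 with hk | hk
    · -- card t = 0
      exfalso
      have ht0 : t = 0 := Multiset.card_eq_zero.mp (by omega)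
      rw [ht0] at hsum_split
      simp only [Multiset.map_zero, Multiset.sum_zero, zero_add] at hsum_split
      linarith [le_trans hut_sum_ub hcu]
    rcases Nat.lt_or_ge (Multiset.card t) 2 with hk2 | hk2
    · omega
    · -- card t ≥ 2 : contradiction
      exfalso
      have htsum_lb : (2:ℝ) * (m - e) ≤ (t.map Complex.re).sum := by
        have h1 := Multiset.card_nsmul_le_sum (s := t.map Complex.re) (a := m - e) (by
          intro x hx
          obtain ⟨z, hz, rfl⟩ := Multiset.mem_map.mp hx
          exact (ht_re z hz).1)
        rw [Multiset.card_map, nsmul_eq_mul] at h1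
        refine le_trans ?_ h1
        have h2 : (2:ℝ) ≤ (Multiset.card t : ℝ) := by exact_mod_cast hk2
        have h3 : 0 ≤ m - e := by linarith
        nlinarith
      have : m ≥ 2*(m-e) - m/4 := by
        rw [← hsum_split]
        have := le_trans (neg_le_neg hcu) hut_sum_lb
        linarith
      linarith
  obtain ⟨lam, hlam⟩ := Multiset.card_eq_one.mp hkt
  have hlam_t : lam ∈ t := by rw [hlam]; exact Multiset.mem_singleton_self lam
  obtain ⟨hlam_s, hlam_near⟩ := Multiset.mem_filter.mp hlam_t
  -- lam is real
  have hconj_t : (starRingEnd ℂ) lam ∈ t := by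
    apply Multiset.mem_filter.mpr
    constructor
    · apply mem_aroots.mpr
      refine ⟨hmon.ne_zero, ?_⟩
      rw [aeval_int_conj, (mem_aroots.mp hlam_s).2, map_zero]
    · have h1 : (starRingEnd ℂ) lam - (m:ℂ) = (starRingEnd ℂ) (lam - (m:ℂ)) := by
        rw [map_sub, Complex.conj_ofReal]
      rw [h1, Complex.norm_conj]
      exact hlam_near
  have hconj_eq : (starRingEnd ℂ) lam = lam := by
    rw [hlam] at hconj_t
    exact Multiset.mem_singleton.mp hconj_t
  have hlC : ((lam.re : ℝ) : ℂ) = lam := Complex.conj_eq_iff_re.mp hconj_eq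
  set l := lam.re with hl_def
  have hl_bounds : m - e ≤ l ∧ l ≤ m + e := ht_re lam hlam_t
  refine ⟨l, ?_, ?_, ?_, ?_⟩
  · -- 1 < l
    have := hl_bounds.1
    linarith
  · exact hl_bounds.2
  · -- aeval l p = 0
    have h1 : aeval ((l:ℂ)) p = 0 := by
      rw [hlC]; exact (mem_aroots.mp hlam_s).2
    rw [aeval_int_ofReal] at h1
    exact_mod_cast h1
  · -- all other roots are small
    intro mu hmu
    rw [hlC] at hmu
    have hmu_s : mu ∈ p.aroots ℂ := Multiset.mem_of_mem_erase hmu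
    have hcount_t : Multiset.count lam t = 1 := by
      rw [hlam, Multiset.count_singleton_self]
    have hcount_s : Multiset.count lam (p.aroots ℂ) = 1 := by
      have := Multiset.count_filter (p := fun z => ‖z - (m:ℂ)‖ ≤ e)
        (a := lam) (s := p.aroots ℂ)
      rw [if_pos hlam_near] at this
      rw [← this, ← ht_def, hcount_t]
    have hmu_ne : mu ≠ lam := by
      rintro rfl
      have h0 : Multiset.count mu ((p.aroots ℂ).erase mu) = 0 := by
        rw [Multiset.count_erase_self, hcount_s]
      exact absurd (Multiset.count_pos.mpr hmu) (by omega)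
    have hmu_far : ¬ ‖mu - (m:ℂ)‖ ≤ e := by
      intro h
      apply hmu_ne
      have : mu ∈ t := Multiset.mem_filter.mpr ⟨hmu_s, h⟩
      rw [hlam] at this
      exact Multiset.mem_singleton.mp this
    have h2e : ‖mu‖ ≤ 2*e := (hdich mu hmu_s).resolve_right hmu_far
    have : 2*e < m - e := by linarith
    calc ‖mu‖ ≤ 2*e := h2e
      _ < m - e := this
      _ ≤ l := hl_bounds.1

lemma choose_le_two_pow' (n i : ℕ) (h : i ≤ n) : n.choose i ≤ 2 ^ n := by
  calc n.choose i ≤ ∑ j ∈ Finset.range (n+1), n.choose j :=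
        Finset.single_le_sum (fun j _ => Nat.zero_le _)
          (Finset.mem_range.mpr (by omega))
    _ = 2 ^ n := Nat.sum_range_choose n

lemma sum_range_sub' (n : ℕ) : ∑ k ∈ Finset.range n, (n - k) = n * (n + 1) / 2 := by
  have hrefl := Finset.sum_range_reflect (fun k => n - k) n
  have h1 : ∑ j ∈ Finset.range n, (n - (n - 1 - j)) = ∑ j ∈ Finset.range n, (j + 1) :=
    Finset.sum_congr rfl fun j hj => by
      have := Finset.mem_range.mp hj; omega
  have h2 : ∑ j ∈ Finset.range n, (j + 1) = (∑ j ∈ Finset.range n, j) + n := by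
    rw [Finset.sum_add_distrib, Finset.sum_const, Finset.card_range, smul_eq_mul, mul_one]
  have h3 := Finset.sum_range_id_mul_two n
  have h4 : ∑ k ∈ Finset.range n, (n - k) = (∑ j ∈ Finset.range n, j) + n :=
    hrefl.symm.trans (h1.trans h2)
  have h5 : n * (n + 1) = n * (n - 1) + 2 * n := by
    cases n with
    | zero => rfl
    | succ k => simp [Nat.succ_sub_one]; ring
  omega

/-- the upper bound box -/
noncomputable def bigBox (n : ℕ) (R : ℝ) : Finset (Fin n → ℤ) :=
  Fintype.piFinset fun k : Fin n =>
    Finset.Icc (-⌈(2:ℝ)^n * R^(n-(k:ℕ))⌉) ⌈(2:ℝ)^n * R^(n-(k:ℕ))⌉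

set_option maxHeartbeats 1000000 in
lemma perron_subset_bigBox (n : ℕ) (R : ℝ) (hR : 1 ≤ R) :
    perronPolys n R ⊆ ↑((bigBox n R).image (polyOf n)) := by
  rintro p ⟨hmon, hdeg, l, hl1, hlR, hl0, hall⟩
  have hR0 : 0 < R := by linarith
  -- all roots bounded by R
  have hroots : ∀ z ∈ (p.map (algebraMap ℤ ℂ)).roots, ‖z‖ ≤ R := by
    intro z hz
    have hz' : z ∈ p.aroots ℂ := by rwa [aroots_def]
    by_cases hzl : z = (l : ℂ)
    · rw [hzl, Complex.norm_real, Real.norm_eq_abs, abs_of_pos (by linarith)]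
      exact hlR
    · have : z ∈ (p.aroots ℂ).erase (l : ℂ) :=
        (Multiset.mem_erase_of_ne hzl).mpr hz'
      exact le_trans (le_of_lt (hall z this)) hlR
  have hcoeff : ∀ k : Fin n, |(p.coeff k : ℝ)| ≤ (2:ℝ)^n * R^(n-(k:ℕ)) := by
    intro k
    have h1 := coeff_le_of_roots_le (k : ℕ) hmon (IsAlgClosed.splits _) hroots
    rw [coeff_map] at h1
    have h2 : ‖((algebraMap ℤ ℂ) (p.coeff k))‖ = |(p.coeff k : ℝ)| := by
      rw [show (algebraMap ℤ ℂ) (p.coeff k) = ((p.coeff k : ℤ) : ℂ) from rfl]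
      rw [Complex.norm_intCast]
    rw [h2, hdeg] at h1
    refine le_trans h1 ?_
    rw [mul_comm]
    have h3 : (n.choose k : ℝ) ≤ (2:ℝ)^n := by
      exact_mod_cast Nat.cast_le.mpr (choose_le_two_pow' n k (le_of_lt k.is_lt))
    exact mul_le_mul_of_nonneg_right h3 (by positivity)
  apply Finset.mem_coe.mpr
  apply Finset.mem_image.mpr
  refine ⟨fun k => p.coeff k, ?_, (eq_polyOf hmon hdeg).symm⟩
  apply Fintype.mem_piFinset.mpr
  intro k
  rw [Finset.mem_Icc]
  have h := hcoeff k
  have hc : |(p.coeff k : ℝ)| ≤ (⌈(2:ℝ)^n * R^(n-(k:ℕ))⌉ : ℝ) :=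
    le_trans h (Int.le_ceil _)
  have : |p.coeff k| ≤ ⌈(2:ℝ)^n * R^(n-(k:ℕ))⌉ := by
    rwa [show |(p.coeff k : ℝ)| = ((|p.coeff k| : ℤ) : ℝ) by push_cast; ring,
      Int.cast_le] at hc
  exact abs_le.mp this

lemma bigBox_card_le (n : ℕ) (R : ℝ) (hR : 1 ≤ R) :
    ((bigBox n R).card : ℝ) ≤ 2^(n*(n+3)) * R^(n*(n+1)/2) := by
  have hR0 : 0 < R := by linarith
  rw [bigBox, Fintype.card_piFinset]
  push_cast
  have hfac : ∀ k : Fin n,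
      ((Finset.Icc (-⌈(2:ℝ)^n * R^(n-(k:ℕ))⌉) ⌈(2:ℝ)^n * R^(n-(k:ℕ))⌉).card : ℝ)
        ≤ 2^(n+3) * R^(n-(k:ℕ)) := by
    intro k
    set x : ℝ := (2:ℝ)^n * R^(n-(k:ℕ)) with hx
    have hx1 : 1 ≤ x := by
      rw [hx]
      have h1 : (1:ℝ) ≤ (2:ℝ)^n := one_le_pow₀ (by norm_num)
      have h2 : (1:ℝ) ≤ R^(n-(k:ℕ)) := one_le_pow₀ hR
      nlinarith
    have hB1 : (1:ℤ) ≤ ⌈x⌉ := by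
      rw [Int.le_ceil_iff]
      push_cast
      linarith
    rw [Int.card_Icc]
    have h3 : (⌈x⌉ + 1 - -⌈x⌉) = 2*⌈x⌉ + 1 := by ring
    rw [h3]
    have h4 : (((2*⌈x⌉ + 1).toNat : ℕ) : ℝ) = 2*(⌈x⌉:ℝ) + 1 := by
      have h4' : ((2*⌈x⌉ + 1).toNat : ℤ) = 2*⌈x⌉ + 1 := Int.toNat_of_nonneg (by omega)
      exact_mod_cast congrArg (Int.cast : ℤ → ℝ) h4'
    rw [h4]
    have h5 : (⌈x⌉ : ℝ) < x + 1 := Int.ceil_lt_add_one x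
    have h6 : (1:ℝ) ≤ R^(n-(k:ℕ)) := one_le_pow₀ hR
    have h7 : 2*(⌈x⌉:ℝ) + 1 ≤ 2 * x + 3 := by linarith
    refine le_trans h7 ?_
    rw [hx]
    have h8 : (2:ℝ) * ((2:ℝ)^n * R^(n-(k:ℕ))) + 3 ≤ (2^(n+1) + 3) * R^(n-(k:ℕ)) := by
      rw [pow_succ]
      nlinarith
    refine le_trans h8 ?_
    have h9 : ((2:ℝ)^(n+1) + 3) ≤ 2^(n+3) := by
      have : (2:ℝ)^(n+3) = 8 * 2^n := by rw [pow_add]; ring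
      have h10 : (2:ℝ)^(n+1) = 2 * 2^n := by rw [pow_add]; ring
      have h11 : (1:ℝ) ≤ (2:ℝ)^n := one_le_pow₀ (by norm_num)
      rw [this, h10]; nlinarith
    exact mul_le_mul_of_nonneg_right h9 (by positivity)
  calc (∏ k : Fin n, ((Finset.Icc (-⌈(2:ℝ)^n * R^(n-(k:ℕ))⌉) ⌈(2:ℝ)^n * R^(n-(k:ℕ))⌉).card : ℝ))
      ≤ ∏ k : Fin n, (2:ℝ)^(n+3) * R^(n-(k:ℕ)) :=
        Finset.prod_le_prod (fun k _ => by positivity) (fun k _ => hfac k)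
    _ = (∏ k : Fin n, (2:ℝ)^(n+3)) * (∏ k : Fin n, R^(n-(k:ℕ))) := Finset.prod_mul_distrib
    _ = 2^(n*(n+3)) * R^(n*(n+1)/2) := by
        rw [Finset.prod_const, Finset.card_univ, Fintype.card_fin, ← pow_mul,
          Finset.prod_pow_eq_pow_sum, Fin.sum_univ_eq_sum_range, sum_range_sub',
          mul_comm (n+3) n]

noncomputable def smallBox (n : ℕ) (R : ℝ) : Finset (Fin n → ℤ) :=
  Fintype.piFinset fun k : Fin n =>
    if (k:ℕ) = n - 1 then Finset.Icc (-⌊R/2⌋) (-⌈R/3⌉)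
    else Finset.Icc (-⌊(R/(24*n))^(n-(k:ℕ))⌋) ⌊(R/(24*n))^(n-(k:ℕ))⌋

lemma smallBox_subset (n : ℕ) (hn : 2 ≤ n) (R : ℝ) (hR : 48 ≤ R) :
    ↑((smallBox n R).image (polyOf n)) ⊆ perronPolys n R := by
  intro q hq
  obtain ⟨c, hc, rfl⟩ := Finset.mem_image.mp (Finset.mem_coe.mp hq)
  have hc' := Fintype.mem_piFinset.mp hc
  have hn0 : 0 < n := by omega
  set kn : Fin n := ⟨n-1, by omega⟩ with hkn
  have hmmem := hc' kn
  rw [if_pos rfl] at hmmem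
  rw [Finset.mem_Icc] at hmmem
  set m : ℝ := -((c kn : ℤ) : ℝ) with hm_def
  have hm_lb : R/3 ≤ m := by
    have h1 : (⌈R/3⌉ : ℝ) ≤ -((c kn : ℤ) : ℝ) := by
      have := hmmem.2
      have h2 : ((c kn : ℤ) : ℝ) ≤ ((-⌈R/3⌉ : ℤ) : ℝ) := by exact_mod_cast this
      push_cast at h2
      linarith
    exact le_trans (Int.le_ceil _) h1
  have hm_ub : m ≤ R/2 := by
    have h1 : ((-⌊R/2⌋ : ℤ) : ℝ) ≤ ((c kn : ℤ) : ℝ) := by exact_mod_cast hmmem.1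
    push_cast at h1
    have := Int.floor_le (R/2)
    rw [hm_def]
    linarith
  have hm3 : 3 ≤ m := by linarith
  have hnext : ((polyOf n c).coeff (n-1) : ℝ) = -m := by
    have h1 : (polyOf n c).coeff (kn : ℕ) = c kn := polyOf_coeff_lt n c kn
    rw [show ((kn : Fin n) : ℕ) = n - 1 from rfl] at h1
    rw [h1, hm_def]
    ring
  have hRn0 : (0:ℝ) < 24 * n := by positivity
  have hsm : ∀ k, k < n - 1 → |((polyOf n c).coeff k : ℝ)| ≤ (m / (8 * n)) ^ (n - k) := by
    intro k hk
    have hklt : k < n := by omega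
    set kk : Fin n := ⟨k, hklt⟩ with hkk
    have h1 : (polyOf n c).coeff k = c kk := polyOf_coeff_lt n c kk
    have hmem2 := hc' kk
    rw [if_neg (by simp [hkk]; omega)] at hmem2
    rw [Finset.mem_Icc] at hmem2
    have habs : |c kk| ≤ ⌊(R/(24*n))^(n-k)⌋ := abs_le.mpr hmem2
    have hx0 : (0:ℝ) ≤ (R/(24*n))^(n-k) := by positivity
    have h2 : |((c kk : ℤ) : ℝ)| ≤ (R/(24*n))^(n-k) := by
      rw [show |((c kk : ℤ) : ℝ)| = ((|c kk| : ℤ) : ℝ) by push_cast; ring]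
      exact le_trans (by exact_mod_cast habs) (Int.floor_le _)
    rw [h1]
    refine le_trans h2 (pow_le_pow_left₀ (by positivity) ?_ _)
    rw [div_le_div_iff₀ hRn0 (by positivity)]
    have : (0:ℝ) ≤ (n:ℝ) := Nat.cast_nonneg n
    nlinarith
  obtain ⟨l, hl1, hl2, hl0, hall⟩ :=
    perron_key hn (polyOf_monic n c) (polyOf_natDegree n c) hm3 hnext hsm
  refine ⟨polyOf_monic n c, polyOf_natDegree n c, l, hl1, ?_, hl0, hall⟩
  have hdiv : m / (8*(n:ℝ)) ≤ m / 16 := by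
    apply div_le_div_of_nonneg_left (by linarith) (by norm_num)
    have h2 : (2:ℝ) ≤ (n:ℝ) := by exact_mod_cast hn
    linarith
  linarith

lemma smallBox_card_ge (n : ℕ) (hn : 2 ≤ n) (R : ℝ) (hR : 48 ≤ R) :
    (R/(24*n))^(n*(n+1)/2) ≤ ((smallBox n R).card : ℝ) := by
  have hn0 : 0 < n := by omega
  have hR0 : (0:ℝ) < R := by linarith
  have hn2 : (2:ℝ) ≤ (n:ℝ) := by exact_mod_cast hn
  rw [smallBox, Fintype.card_piFinset]
  push_cast
  have hfac : ∀ k : Fin n, (R/(24*n))^(n-(k:ℕ)) ≤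
      (((if (k:ℕ) = n - 1 then Finset.Icc (-⌊R/2⌋) (-⌈R/3⌉)
        else Finset.Icc (-⌊(R/(24*n))^(n-(k:ℕ))⌋) ⌊(R/(24*n))^(n-(k:ℕ))⌋).card : ℕ) : ℝ) := by
    intro k
    by_cases hk : (k:ℕ) = n - 1
    · rw [if_pos hk, Int.card_Icc]
      have he : n - (k:ℕ) = 1 := by omega
      rw [he, pow_one]
      have h1 : (R/2 - 1 : ℝ) < (⌊R/2⌋ : ℝ) := Int.sub_one_lt_floor _
      have h2 : (⌈R/3⌉ : ℝ) < R/3 + 1 := Int.ceil_lt_add_one _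
      have h3 : ((-⌈R/3⌉ + 1 - -⌊R/2⌋ : ℤ) : ℝ) ≤ (((-⌈R/3⌉ + 1 - -⌊R/2⌋).toNat : ℕ) : ℝ) := by
        exact_mod_cast Int.self_le_toNat _
      refine le_trans ?_ h3
      push_cast
      have h4 : R/(24*(n:ℝ)) ≤ R/48 := by
        apply div_le_div_of_nonneg_left (by linarith) (by norm_num)
        linarith
      linarith
    · rw [if_neg hk, Int.card_Icc]
      set x : ℝ := (R/(24*n))^(n-(k:ℕ)) with hx
      have hx0 : (0:ℝ) ≤ x := by positivity
      have hf0 : (0:ℤ) ≤ ⌊x⌋ := Int.floor_nonneg.mpr hx0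
      have h3 : ((⌊x⌋ + 1 - -⌊x⌋ : ℤ) : ℝ) ≤ (((⌊x⌋ + 1 - -⌊x⌋).toNat : ℕ) : ℝ) := by
        exact_mod_cast Int.self_le_toNat _
      refine le_trans ?_ h3
      push_cast
      have h5 : x < (⌊x⌋ : ℝ) + 1 := Int.lt_floor_add_one x
      have h6 : (0:ℝ) ≤ (⌊x⌋ : ℝ) := by exact_mod_cast hf0
      linarith
  calc (R/(24*n))^(n*(n+1)/2) = ∏ k : Fin n, (R/(24*n))^(n-(k:ℕ)) := by
        rw [Finset.prod_pow_eq_pow_sum, Fin.sum_univ_eq_sum_range, sum_range_sub']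
    _ ≤ _ := Finset.prod_le_prod (fun k _ => by positivity) (fun k _ => hfac k)


/-- `|P_n(R)| ∼ R^(n(n+1)/2)`: there is `C > 0` with
`(1/C) · R^(n(n+1)/2) ≤ |P_n(R)| ≤ C · R^(n(n+1)/2)` for all sufficiently large `R`. -/
theorem perronPolys_card_asymp (n : ℕ) (hn : 2 ≤ n) :
    ∃ C : ℝ, 0 < C ∧ ∀ᶠ R : ℝ in Filter.atTop,
      (1 / C) * R ^ (n * (n + 1) / 2) ≤ ((perronPolys n R).ncard : ℝ) ∧
      ((perronPolys n R).ncard : ℝ) ≤ C * R ^ (n * (n + 1) / 2) := by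
  have hn0 : 0 < n := by omega
  have hn2 : (2:ℝ) ≤ (n:ℝ) := by exact_mod_cast hn
  refine ⟨((24:ℝ)*n)^(n*(n+3)), by positivity, ?_⟩
  filter_upwards [Filter.eventually_ge_atTop (48:ℝ)] with R hR
  have hR1 : (1:ℝ) ≤ R := by linarith
  have hR0 : (0:ℝ) < R := by linarith
  have h24 : (2:ℝ) ≤ 24*(n:ℝ) := by linarith
  have hfin : (perronPolys n R).Finite :=
    Set.Finite.subset (Finset.finite_toSet _) (perron_subset_bigBox n R hR1)
  constructor
  · -- lower bound
    have hsub := smallBox_subset n hn R hR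
    have h1 : ((smallBox n R).image (polyOf n)).card ≤ (perronPolys n R).ncard := by
      have := Set.ncard_le_ncard hsub hfin
      rwa [Set.ncard_coe_finset] at this
    have h2 : (smallBox n R).card = ((smallBox n R).image (polyOf n)).card :=
      (Finset.card_image_of_injective _ (polyOf_injective n)).symm
    have h3 : (R/(24*n))^(n*(n+1)/2) ≤ ((perronPolys n R).ncard : ℝ) := by
      refine le_trans (smallBox_card_ge n hn R hR) ?_
      exact_mod_cast h2 ▸ h1
    refine le_trans ?_ h3
    rw [div_pow, one_div, inv_mul_eq_div]
    have hle : ((24:ℝ)*n)^(n*(n+1)/2) ≤ ((24:ℝ)*n)^(n*(n+3)) := by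
      apply pow_le_pow_right₀ (by linarith)
      calc n*(n+1)/2 ≤ n*(n+1) := Nat.div_le_self _ _
        _ ≤ n*(n+3) := Nat.mul_le_mul_left n (by omega)
    exact div_le_div_of_nonneg_left (by positivity) (by positivity) hle
  · -- upper bound
    have h1 : (perronPolys n R).ncard ≤ (bigBox n R).card := by
      have := Set.ncard_le_ncard (perron_subset_bigBox n R hR1) (Finset.finite_toSet _)
      rw [Set.ncard_coe_finset] at this
      exact le_trans this Finset.card_image_le
    have h2 : ((perronPolys n R).ncard : ℝ) ≤ ((bigBox n R).card : ℝ) := by exact_mod_cast h1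
    refine le_trans h2 (le_trans (bigBox_card_le n R hR1) ?_)
    have h3 : (2:ℝ)^(n*(n+3)) ≤ ((24:ℝ)*n)^(n*(n+3)) := pow_le_pow_left₀ (by norm_num) h24 _
    exact mul_le_mul_of_nonneg_right h3 (by positivity)
end
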